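/- arXiv:2301.06036 — 5 statements merged into one kernel-verified Lean document; each statement's English description precedes it below -/
import Mathlib

section
/- Define μ(r,θ) = (r/(D cos θ))·[arctan(D/(2r cos θ) + tan θ) + arctan(D/(2r cos θ) - tan θ)] for r, D > 0 and θ ∈ (-π/2, π/2). Then μ(r, θ) tends to 1 as r → ∞. -/
open Real

theorem stmt2 (D θ : ℝ) (hD : 0 < D) (hθ : θ ∈ Set.Ioo (-(π/2)) (π/2)) :
    Filter.Tendsto
      (fun r : ℝ => (r/(D*Real.cos θ)) *
        (Real.arctan (D/(2*r*Real.cos θ) + Real.tan θ)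
          + Real.arctan (D/(2*r*Real.cos θ) - Real.tan θ)))
      Filter.atTop (nhds 1) := by
  have hc : 0 < Real.cos θ := Real.cos_pos_of_mem_Ioo (by simpa using hθ)
  set c := Real.cos θ with hcdef
  set t := Real.tan θ with htdef
  set g : ℝ → ℝ := fun a => Real.arctan (a + t) + Real.arctan (a - t) with hg
  have hg0 : g 0 = 0 := by
    simp [hg, Real.arctan_neg]
  -- derivative of g at 0
  have hd1 : HasDerivAt (fun a : ℝ => Real.arctan (a + t)) (1/(1+t^2)) 0 := by
    have := (Real.hasDerivAt_arctan (0 + t)).comp 0 ((hasDerivAt_id 0).add_const t)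
    simpa [Function.comp_def] using this
  have hd2 : HasDerivAt (fun a : ℝ => Real.arctan (a - t)) (1/(1+t^2)) 0 := by
    have := (Real.hasDerivAt_arctan (0 - t)).comp 0 ((hasDerivAt_id 0).sub_const t)
    simpa [neg_sq, Function.comp_def] using this
  have hdg : HasDerivAt g (2*c^2) 0 := by
    have h := hd1.add hd2
    have htan : (1 + t^2)⁻¹ = c^2 := by
      rw [htdef, hcdef]; exact Real.inv_one_add_tan_sq (ne_of_gt hc)
    have : 1/(1+t^2) + 1/(1+t^2) = 2*c^2 := by
      have h1t : (0:ℝ) < 1 + t^2 := by positivity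
      rw [← htan]
      field_simp
      ring
    rwa [this] at h
  have hslope : Filter.Tendsto (fun a : ℝ => g a / a) (nhdsWithin 0 {0}ᶜ) (nhds (2*c^2)) := by
    have := hasDerivAt_iff_tendsto_slope.mp hdg
    refine this.congr' ?_
    filter_upwards [self_mem_nhdsWithin] with a ha
    simp [slope, hg0, div_eq_inv_mul]
  -- a r = D/(2*r*c) tends to 0 within {0}ᶜ
  have ha0 : Filter.Tendsto (fun r : ℝ => D/(2*r*c)) Filter.atTop (nhds 0) := by
    have : (fun r : ℝ => D/(2*r*c)) = (fun r : ℝ => (fun _ => D/(2*c)) r / id r) := by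
      funext r; simp only [id]; ring
    rw [this]
    exact Filter.Tendsto.div_atTop tendsto_const_nhds Filter.tendsto_id
  have ha : Filter.Tendsto (fun r : ℝ => D/(2*r*c)) Filter.atTop (nhdsWithin 0 {0}ᶜ) := by
    refine tendsto_nhdsWithin_of_tendsto_nhds_of_eventually_within _ ha0 ?_
    filter_upwards [Filter.eventually_gt_atTop 0] with r hr
    have : 0 < D/(2*r*c) := div_pos hD (by positivity)
    exact ne_of_gt this
  have hmain : Filter.Tendsto
      (fun r : ℝ => (g (D/(2*r*c)) / (D/(2*r*c))) * (1/(2*c^2)))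
      Filter.atTop (nhds (2*c^2 * (1/(2*c^2)))) :=
    (hslope.comp ha).mul_const _
  have hval : 2*c^2 * (1/(2*c^2)) = 1 := by
    field_simp
  rw [hval] at hmain
  refine hmain.congr' ?_
  filter_upwards [Filter.eventually_gt_atTop 0] with r hr
  have har : D/(2*r*c) ≠ 0 := ne_of_gt (div_pos hD (by positivity))
  simp only [hg]
  field_simp
end

section
/- Let μ(r,θ) = (r/(D cos θ))·[arctan(D/(2r cos θ) + tan θ) + arctan(D/(2r cos θ) - tan θ)]. If 0 ≤ θ < π/6, then μ(r,θ) < 1 for all r > 0. -/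
open Real

lemma key_aux (t : ℝ) (ht : 3*t^2 < 1) {a : ℝ} (ha : 0 < a) :
    Real.arctan (a + t) + Real.arctan (a - t) < 2*a/(1+t^2) := by
  set F : ℝ → ℝ := fun a => 2*a/(1+t^2) - Real.arctan (a+t) - Real.arctan (a-t) with hFdef
  have ht1 : (0:ℝ) < 1 + t^2 := by positivity
  have hF : ∀ x : ℝ, HasDerivAt F (2/(1+t^2) - 1/(1+(x+t)^2) - 1/(1+(x-t)^2)) x := by
    intro x
    have h1 : HasDerivAt (fun x : ℝ => Real.arctan (x+t)) (1/(1+(x+t)^2)) x := by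
      have := (Real.hasDerivAt_arctan (x+t)).comp x ((hasDerivAt_id x).add_const t)
      simpa [Function.comp_def] using this
    have h2 : HasDerivAt (fun x : ℝ => Real.arctan (x-t)) (1/(1+(x-t)^2)) x := by
      have := (Real.hasDerivAt_arctan (x-t)).comp x ((hasDerivAt_id x).sub_const t)
      simpa [Function.comp_def] using this
    have h0 : HasDerivAt (fun x : ℝ => 2*x/(1+t^2)) (2/(1+t^2)) x := by
      have : HasDerivAt (fun x : ℝ => x * (2/(1+t^2))) (2/(1+t^2)) x := by
        simpa using (hasDerivAt_id x).mul_const (2/(1+t^2))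
      convert this using 2 with y
      ring
    exact (h0.sub h1).sub h2
  have hmono : StrictMonoOn F (Set.Ici 0) := by
    apply strictMonoOn_of_deriv_pos (convex_Ici 0)
    · exact fun x _ => ((hF x).continuousAt).continuousWithinAt
    · intro x hx
      rw [interior_Ici] at hx
      rw [(hF x).deriv]
      have hx' : 0 < x := hx
      have d1 : (0:ℝ) < 1 + (x+t)^2 := by positivity
      have d2 : (0:ℝ) < 1 + (x-t)^2 := by positivity
      rw [sub_sub, sub_pos, div_add_div _ _ (ne_of_gt d1) (ne_of_gt d2),
        div_lt_div_iff₀ (by positivity) ht1]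
      nlinarith [sq_nonneg x, sq_nonneg (x*t), mul_pos (mul_pos hx' hx') (sub_pos.mpr ht), sq_nonneg (x*x)]
  have h0 : F 0 = 0 := by
    simp [hFdef, Real.arctan_neg]
  have := hmono (Set.self_mem_Ici) (Set.mem_Ici.mpr ha.le) ha
  rw [h0] at this
  simp only [hFdef] at this
  linarith

theorem stmt4 (D θ : ℝ) (hD : 0 < D) (hθ0 : 0 ≤ θ) (hθ1 : θ < π/6) :
    ∀ r : ℝ, 0 < r →
      (r/(D*Real.cos θ)) *
        (Real.arctan (D/(2*r*Real.cos θ) + Real.tan θ)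
          + Real.arctan (D/(2*r*Real.cos θ) - Real.tan θ)) < 1 := by
  intro r hr
  have hπ : (0:ℝ) < π := Real.pi_pos
  have hθlt : θ < π/2 := lt_trans hθ1 (by linarith)
  have hcos : 0 < Real.cos θ := Real.cos_pos_of_mem_Ioo ⟨by linarith, hθlt⟩
  set t := Real.tan θ with htdef
  have hs3 : (0:ℝ) < Real.sqrt 3 := Real.sqrt_pos.mpr (by norm_num)
  have htan6 : Real.tan (π/6) = 1/Real.sqrt 3 := by
    rw [Real.tan_eq_sin_div_cos, Real.sin_pi_div_six, Real.cos_pi_div_six]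
    field_simp
  have ht0 : 0 ≤ t := by
    rw [htdef, Real.tan_eq_sin_div_cos]
    exact div_nonneg (Real.sin_nonneg_of_nonneg_of_le_pi hθ0 (by linarith)) hcos.le
  have htlt : t < 1/Real.sqrt 3 := by
    rw [← htan6]
    exact Real.tan_lt_tan_of_nonneg_of_lt_pi_div_two hθ0 (by linarith) hθ1
  have hsq : Real.sqrt 3 ^ 2 = 3 := Real.sq_sqrt (by norm_num)
  have h1 : Real.sqrt 3 * t < 1 := by
    have := (lt_div_iff₀ hs3).mp htlt
    linarith
  have ht : 3*t^2 < 1 := by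
    nlinarith [mul_nonneg hs3.le ht0, hsq, h1]
  set a := D/(2*r*Real.cos θ) with hadef
  have ha : 0 < a := by positivity
  have hkey := key_aux t ht ha
  have hmulpos : 0 < r/(D*Real.cos θ) := by positivity
  calc (r/(D*Real.cos θ)) * (Real.arctan (a + t) + Real.arctan (a - t))
      < (r/(D*Real.cos θ)) * (2*a/(1+t^2)) := by
        exact mul_lt_mul_of_pos_left hkey hmulpos
    _ = 1 := by
        have hpyth : Real.sin θ ^2 + Real.cos θ^2 = 1 := Real.sin_sq_add_cos_sq θ
        rw [hadef, htdef, Real.tan_eq_sin_div_cos]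
        field_simp
        nlinarith [hpyth]
end

section
/- Let μ(r,θ) = (r/(D cos θ))·[arctan(D/(2r cos θ) + tan θ) + arctan(D/(2r cos θ) - tan θ)] for D > 0, r > 0, θ ∈ (-π/2, π/2). The second partial derivative of μ with respect to r equals 8D²·f₁(r,θ)/f₂(r,θ), where f₁(r,θ) = 16cos⁴θ(tan²θ+1)(3tan²θ-1)r⁴ - 8D²cos²θ(tan²θ+1)r² - D⁴, and f₂(r,θ) = [(4cos²θ tan²θ + 4cos²θ)r² - 4D cosθ tanθ r + D²]²·[(4cos²θ tan²θ + 4cos²θ)r² + 4D cosθ tanθ r + D²]². -/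
open Real

lemma Qpos (D c t s : ℝ) (hc : c ≠ 0) (hs : s ≠ 0) :
    0 < (4*c^2*t^2+4*c^2)*s^2 + 4*D*c*t*s + D^2 := by
  have h1 : (0:ℝ) < (2*c*s)^2 := by positivity
  nlinarith [sq_nonneg (2*c*t*s+D)]

lemma huD (D c : ℝ) {s : ℝ} (hc : c ≠ 0) (hs : s ≠ 0) :
    HasDerivAt (fun s : ℝ => D/(2*s*c)) (-(2*D*c)/(2*s*c)^2) s := by
  have h2sc : 2*s*c ≠ 0 := by
    simp [hs, hc]
  have := (hasDerivAt_const s D).div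
    (((hasDerivAt_id s).const_mul 2).mul_const c) h2sc
  simp only [id_eq] at this
  refine this.congr_deriv ?_
  ring

lemma aux1 (D c t : ℝ) (hD : D ≠ 0) (hc : c ≠ 0) {s : ℝ} (hs : s ≠ 0) :
    HasDerivAt (fun s : ℝ => (s/(D*c)) *
        (Real.arctan (D/(2*s*c) + t) + Real.arctan (D/(2*s*c) - t)))
      (1/(D*c) * (Real.arctan (D/(2*s*c)+t) + Real.arctan (D/(2*s*c)-t))
        - 2*s/((4*c^2*t^2+4*c^2)*s^2 + 4*D*c*t*s + D^2)
        - 2*s/((4*c^2*t^2+4*c^2)*s^2 - 4*D*c*t*s + D^2)) s := by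
  have hu := huD D c hc hs
  have ha := (hu.add_const t).arctan
  have hb := (hu.sub_const t).arctan
  have hlin : HasDerivAt (fun s : ℝ => s/(D*c)) (1/(D*c)) s := by
    simpa using (hasDerivAt_id s).div_const (D*c)
  have hmul := hlin.mul (ha.add hb)
  refine hmul.congr_deriv ?_
  have h2sc : (2:ℝ)*s*c ≠ 0 := by simp [hs, hc]
  have hQp : (4*c^2*t^2+4*c^2)*s^2 + 4*D*c*t*s + D^2 ≠ 0 := (Qpos D c t s hc hs).ne'
  have hQm : (4*c^2*t^2+4*c^2)*s^2 - 4*D*c*t*s + D^2 ≠ 0 := by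
    have := (Qpos D c (-t) s hc hs).ne'
    convert this using 2 <;> ring
  have h1A : 1+(D/(2*s*c)+t)^2 ≠ 0 := by positivity
  have h1B : 1+(D/(2*s*c)-t)^2 ≠ 0 := by positivity
  have hA : 1/(1+(D/(2*s*c)+t)^2) * (-(2*D*c)/(2*s*c)^2)
      = -(2*D*c)/((4*c^2*t^2+4*c^2)*s^2 + 4*D*c*t*s + D^2) := by
    have hE : 1+(D/(2*s*c)+t)^2 = ((4*c^2*t^2+4*c^2)*s^2 + 4*D*c*t*s + D^2)/(2*s*c)^2 := by
      field_simp
      ring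
    rw [hE]
    field_simp
  have hB : 1/(1+(D/(2*s*c)-t)^2) * (-(2*D*c)/(2*s*c)^2)
      = -(2*D*c)/((4*c^2*t^2+4*c^2)*s^2 - 4*D*c*t*s + D^2) := by
    have hE : 1+(D/(2*s*c)-t)^2 = ((4*c^2*t^2+4*c^2)*s^2 - 4*D*c*t*s + D^2)/(2*s*c)^2 := by
      field_simp
      ring
    rw [hE]
    field_simp
  simp only [Pi.add_apply, hA, hB]
  field_simp
  ring

lemma aux2 (D c t : ℝ) (hD : D ≠ 0) (hc : c ≠ 0) {s : ℝ} (hs : s ≠ 0) :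
    HasDerivAt (fun s : ℝ =>
      1/(D*c) * (Real.arctan (D/(2*s*c)+t) + Real.arctan (D/(2*s*c)-t))
        - 2*s/((4*c^2*t^2+4*c^2)*s^2 + 4*D*c*t*s + D^2)
        - 2*s/((4*c^2*t^2+4*c^2)*s^2 - 4*D*c*t*s + D^2))
      (8*D^2 * (16*c^4*(t^2+1)*(3*t^2-1)*s^4 - 8*D^2*c^2*(t^2+1)*s^2 - D^4)
        / (((4*c^2*t^2 + 4*c^2)*s^2 - 4*D*c*t*s + D^2)^2
          * ((4*c^2*t^2 + 4*c^2)*s^2 + 4*D*c*t*s + D^2)^2)) s := by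
  have hu := huD D c hc hs
  have ha := (hu.add_const t).arctan
  have hb := (hu.sub_const t).arctan
  have hQp : (4*c^2*t^2+4*c^2)*s^2 + 4*D*c*t*s + D^2 ≠ 0 := (Qpos D c t s hc hs).ne'
  have hQm : (4*c^2*t^2+4*c^2)*s^2 - 4*D*c*t*s + D^2 ≠ 0 := by
    have := (Qpos D c (-t) s hc hs).ne'
    convert this using 2 <;> ring
  have hQpD : HasDerivAt (fun s : ℝ => (4*c^2*t^2+4*c^2)*s^2 + 4*D*c*t*s + D^2)
      ((4*c^2*t^2+4*c^2)*(2*s) + 4*D*c*t) s := by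
    have h1 := (hasDerivAt_pow 2 s).const_mul ((4:ℝ)*c^2*t^2+4*c^2)
    have h2 := (hasDerivAt_id s).const_mul ((4:ℝ)*D*c*t)
    have := (h1.add h2).add_const (D^2)
    simp only [id_eq] at this
    refine this.congr_deriv ?_
    push_cast; ring
  have hQmD : HasDerivAt (fun s : ℝ => (4*c^2*t^2+4*c^2)*s^2 - 4*D*c*t*s + D^2)
      ((4*c^2*t^2+4*c^2)*(2*s) - 4*D*c*t) s := by
    have h1 := (hasDerivAt_pow 2 s).const_mul ((4:ℝ)*c^2*t^2+4*c^2)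
    have h2 := (hasDerivAt_id s).const_mul ((4:ℝ)*D*c*t)
    have := (h1.sub h2).add_const (D^2)
    simp only [id_eq] at this
    refine this.congr_deriv ?_
    push_cast; ring
  have hnum : HasDerivAt (fun s : ℝ => 2*s) (2:ℝ) s := by
    simpa using (hasDerivAt_id s).const_mul (2:ℝ)
  have hdp := hnum.div hQpD hQp
  have hdm := hnum.div hQmD hQm
  have htop := (ha.add hb).const_mul (1/(D*c))
  have total := (htop.sub hdp).sub hdm
  refine total.congr_deriv ?_
  have h2sc : (2:ℝ)*s*c ≠ 0 := by simp [hs, hc]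
  have h1A : 1+(D/(2*s*c)+t)^2 ≠ 0 := by positivity
  have h1B : 1+(D/(2*s*c)-t)^2 ≠ 0 := by positivity
  have hA : 1/(1+(D/(2*s*c)+t)^2) * (-(2*D*c)/(2*s*c)^2)
      = -(2*D*c)/((4*c^2*t^2+4*c^2)*s^2 + 4*D*c*t*s + D^2) := by
    have hE : 1+(D/(2*s*c)+t)^2 = ((4*c^2*t^2+4*c^2)*s^2 + 4*D*c*t*s + D^2)/(2*s*c)^2 := by
      field_simp
      ring
    rw [hE]
    field_simp
  have hB : 1/(1+(D/(2*s*c)-t)^2) * (-(2*D*c)/(2*s*c)^2)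
      = -(2*D*c)/((4*c^2*t^2+4*c^2)*s^2 - 4*D*c*t*s + D^2) := by
    have hE : 1+(D/(2*s*c)-t)^2 = ((4*c^2*t^2+4*c^2)*s^2 - 4*D*c*t*s + D^2)/(2*s*c)^2 := by
      field_simp
      ring
    rw [hE]
    field_simp
  simp only [Pi.add_apply, hA, hB]
  generalize hP : (4*c^2*t^2+4*c^2)*s^2 + 4*D*c*t*s + D^2 = P at hQp ⊢
  generalize hM : (4*c^2*t^2+4*c^2)*s^2 - 4*D*c*t*s + D^2 = M at hQm ⊢
  field_simp
  rw [← hP, ← hM]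
  ring

theorem stmt5 (D θ : ℝ) (hD : 0 < D) (hθ : θ ∈ Set.Ioo (-(π/2)) (π/2))
    (r : ℝ) (hr : 0 < r) :
    deriv (deriv (fun s : ℝ => (s/(D*Real.cos θ)) *
        (Real.arctan (D/(2*s*Real.cos θ) + Real.tan θ)
          + Real.arctan (D/(2*s*Real.cos θ) - Real.tan θ)))) r
    = 8*D^2 *
        (16*(Real.cos θ)^4*((Real.tan θ)^2+1)*(3*(Real.tan θ)^2-1)*r^4
          - 8*D^2*(Real.cos θ)^2*((Real.tan θ)^2+1)*r^2 - D^4)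
      / (((4*(Real.cos θ)^2*(Real.tan θ)^2 + 4*(Real.cos θ)^2)*r^2
            - 4*D*(Real.cos θ)*(Real.tan θ)*r + D^2)^2
        * ((4*(Real.cos θ)^2*(Real.tan θ)^2 + 4*(Real.cos θ)^2)*r^2
            + 4*D*(Real.cos θ)*(Real.tan θ)*r + D^2)^2) := by
  have hc : (0:ℝ) < Real.cos θ := Real.cos_pos_of_mem_Ioo hθ
  have hEq : deriv (fun s : ℝ => (s/(D*Real.cos θ)) *
        (Real.arctan (D/(2*s*Real.cos θ) + Real.tan θ)
          + Real.arctan (D/(2*s*Real.cos θ) - Real.tan θ)))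
      =ᶠ[nhds r] (fun s : ℝ =>
        1/(D*Real.cos θ) * (Real.arctan (D/(2*s*Real.cos θ)+Real.tan θ)
            + Real.arctan (D/(2*s*Real.cos θ)-Real.tan θ))
          - 2*s/((4*(Real.cos θ)^2*(Real.tan θ)^2+4*(Real.cos θ)^2)*s^2
              + 4*D*(Real.cos θ)*(Real.tan θ)*s + D^2)
          - 2*s/((4*(Real.cos θ)^2*(Real.tan θ)^2+4*(Real.cos θ)^2)*s^2
              - 4*D*(Real.cos θ)*(Real.tan θ)*s + D^2)) := by
    filter_upwards [Ioi_mem_nhds hr] with s hs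
    exact (aux1 D (Real.cos θ) (Real.tan θ) hD.ne' hc.ne' (ne_of_gt hs)).deriv
  rw [hEq.deriv_eq]
  exact (aux2 D (Real.cos θ) (Real.tan θ) hD.ne' hc.ne' hr.ne').deriv
end

section
/- For D_y, D_z, r > 0, the double integral r²·∫₀^{1/√π} ∫_{-π}^{π} ρ/((D_y² cos²φ + D_z² sin²φ)ρ² + r²) dφ dρ equals (2πr²/(D_y D_z))·ln[ (D_z·√(D_y²/(πr²)+1) + D_y·√(D_z²/(πr²)+1)) / (D_y + D_z) ]. -/
open Real

lemma pos_comb (u v c s : ℝ) (hu : 0 < u) (hv : 0 < v) (h : s^2+c^2=1) :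
    0 < u*c^2+v*s^2 := by
  have hmin : 0 < min u v := lt_min hu hv
  calc (0:ℝ) < min u v * (s^2+c^2) := by rw [h]; simpa using hmin
  _ = min u v * s^2 + min u v * c^2 := by ring
  _ ≤ u*c^2+v*s^2 := by
      rw [add_comm (u*c^2)]
      gcongr
      exacts [min_le_right _ _, min_le_left _ _]

lemma inner_int (a b : ℝ) (ha : 0 < a) (hb : 0 < b) :
    ∫ φ in (-π)..π, 1/(a*(Real.cos φ)^2 + b*(Real.sin φ)^2) = 2*π/Real.sqrt (a*b) := by
  set u := Real.sqrt a with hu'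
  set v := Real.sqrt b with hv'
  have hu : 0 < u := Real.sqrt_pos.2 ha
  have hv : 0 < v := Real.sqrt_pos.2 hb
  have hua : u^2 = a := Real.sq_sqrt ha.le
  have hvb : v^2 = b := Real.sq_sqrt hb.le
  set G : ℝ → ℝ := fun φ =>
    (φ + Real.arctan ((v-u)*(Real.sin φ*Real.cos φ)/(u*(Real.cos φ)^2 + v*(Real.sin φ)^2)))/(u*v)
    with hG
  have hderiv : ∀ φ ∈ Set.uIcc (-π) π,
      HasDerivAt G (1/(a*(Real.cos φ)^2 + b*(Real.sin φ)^2)) φ := by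
    intro φ _
    have hsc : (Real.sin φ)^2 + (Real.cos φ)^2 = 1 := Real.sin_sq_add_cos_sq φ
    have hD : 0 < u*(Real.cos φ)^2 + v*(Real.sin φ)^2 := pos_comb u v _ _ hu hv hsc
    have hN : HasDerivAt (fun x => (v-u)*(Real.sin x*Real.cos x))
        ((v-u)*(Real.cos φ*Real.cos φ + Real.sin φ*(-Real.sin φ))) φ :=
      (((Real.hasDerivAt_sin φ).mul (Real.hasDerivAt_cos φ))).const_mul (v-u)
    have hDen : HasDerivAt (fun x => u*(Real.cos x)^2 + v*(Real.sin x)^2)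
        (u*(2*Real.cos φ*(-Real.sin φ)) + v*(2*Real.sin φ*(Real.cos φ))) φ := by
      have h1 : HasDerivAt (fun x => (Real.cos x)^2) (2*Real.cos φ*(-Real.sin φ)) φ := by
        simpa using ((Real.hasDerivAt_cos φ).fun_pow 2)
      have h2 : HasDerivAt (fun x => (Real.sin x)^2) (2*Real.sin φ*(Real.cos φ)) φ := by
        simpa using ((Real.hasDerivAt_sin φ).fun_pow 2)
      exact (h1.const_mul u).add (h2.const_mul v)
    have hQ := hN.div hDen hD.ne'
    have hA := hQ.arctan
    have hfinal := ((hasDerivAt_id φ).add hA).div_const (u*v)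
    have hD2 : (u^2*(Real.cos φ)^2 + v^2*(Real.sin φ)^2) ≠ 0 :=
      (pos_comb (u^2) (v^2) _ _ (pow_pos hu 2) (pow_pos hv 2) hsc).ne'
    refine hfinal.congr_deriv ?_
    symm
    simp only [Pi.div_apply]
    rw [← hua, ← hvb]
    field_simp
    linear_combination (-1*u*v^3*(Real.cos φ)^2*(Real.sin φ)^2 - 1*u*v^3*(Real.sin φ)^4 - 1*u^3*v*(Real.cos φ)^4 - 1*u^3*v*(Real.cos φ)^2*(Real.sin φ)^2) * hsc
  have hcont : Continuous fun φ => 1/(a*(Real.cos φ)^2 + b*(Real.sin φ)^2) := by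
    apply Continuous.div continuous_const
    · fun_prop
    · intro x
      exact (pos_comb a b _ _ ha hb (Real.sin_sq_add_cos_sq x)).ne'
  rw [intervalIntegral.integral_eq_sub_of_hasDerivAt hderiv (hcont.intervalIntegrable _ _)]
  simp [hG, Real.sqrt_mul ha.le]
  ring



lemma outer_int (Dy Dz r X : ℝ) (hDy : 0 < Dy) (hDz : 0 < Dz) (hr : 0 < r) :
    ∫ ρ in (0:ℝ)..X, 2*π*ρ/Real.sqrt ((Dy^2*ρ^2+r^2)*(Dz^2*ρ^2+r^2))
    = (2*π/(Dy*Dz)) * (Real.log (Dz*Real.sqrt (Dy^2*X^2+r^2) + Dy*Real.sqrt (Dz^2*X^2+r^2))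
        - Real.log ((Dy+Dz)*r)) := by
  set F : ℝ → ℝ := fun ρ =>
    (2*π/(Dy*Dz)) * Real.log (Dz*Real.sqrt (Dy^2*ρ^2+r^2) + Dy*Real.sqrt (Dz^2*ρ^2+r^2)) with hF
  have key : ∀ ρ : ℝ, HasDerivAt F (2*π*ρ/Real.sqrt ((Dy^2*ρ^2+r^2)*(Dz^2*ρ^2+r^2))) ρ := by
    intro ρ
    have hApos : 0 < Dy^2*ρ^2+r^2 := by positivity
    have hBpos : 0 < Dz^2*ρ^2+r^2 := by positivity
    have hp : 0 < Real.sqrt (Dy^2*ρ^2+r^2) := Real.sqrt_pos.2 hApos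
    have hq : 0 < Real.sqrt (Dz^2*ρ^2+r^2) := Real.sqrt_pos.2 hBpos
    have hsum : 0 < Dz*Real.sqrt (Dy^2*ρ^2+r^2) + Dy*Real.sqrt (Dz^2*ρ^2+r^2) := by positivity
    have hA : HasDerivAt (fun x => Dy^2*x^2+r^2) (Dy^2*(2*ρ)) ρ := by
      simpa using ((hasDerivAt_pow 2 ρ).const_mul (Dy^2)).add_const (r^2)
    have hB : HasDerivAt (fun x => Dz^2*x^2+r^2) (Dz^2*(2*ρ)) ρ := by
      simpa using ((hasDerivAt_pow 2 ρ).const_mul (Dz^2)).add_const (r^2)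
    have hsA := (hA.sqrt hApos.ne').const_mul Dz
    have hsB := (hB.sqrt hBpos.ne').const_mul Dy
    have hlog := ((hsA.add hsB).log hsum.ne').const_mul (2*π/(Dy*Dz))
    refine hlog.congr_deriv ?_
    symm
    simp only [Pi.add_apply]
    rw [Real.sqrt_mul hApos.le]
    set p := Real.sqrt (Dy^2*ρ^2+r^2)
    set q := Real.sqrt (Dz^2*ρ^2+r^2)
    field_simp
    ring
  have hcont : Continuous fun ρ => 2*π*ρ/Real.sqrt ((Dy^2*ρ^2+r^2)*(Dz^2*ρ^2+r^2)) := by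
    apply Continuous.div (by fun_prop) (Real.continuous_sqrt.comp (by fun_prop))
    intro x
    exact (Real.sqrt_pos.2 (by positivity)).ne'
  rw [intervalIntegral.integral_eq_sub_of_hasDerivAt (fun ρ _ => key ρ)
    (hcont.intervalIntegrable _ _)]
  have h0 : F 0 = (2*π/(Dy*Dz)) * Real.log ((Dy+Dz)*r) := by
    simp only [hF]
    rw [show Dy^2*(0:ℝ)^2+r^2 = r^2 by ring, show Dz^2*(0:ℝ)^2+r^2 = r^2 by ring,
      Real.sqrt_sq hr.le]
    ring_nf
  rw [h0, hF]
  ring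


theorem stmt9 (Dy Dz r : ℝ) (hDy : 0 < Dy) (hDz : 0 < Dz) (hr : 0 < r) :
    r^2 * ∫ ρ in (0:ℝ)..(1/Real.sqrt π), ∫ φ in (-π)..π,
        ρ / ((Dy^2*(Real.cos φ)^2 + Dz^2*(Real.sin φ)^2)*ρ^2 + r^2)
    = (2*π*r^2/(Dy*Dz)) *
        Real.log ((Dz*Real.sqrt (Dy^2/(π*r^2)+1) + Dy*Real.sqrt (Dz^2/(π*r^2)+1))
          / (Dy + Dz)) := by
  have hπ : 0 < π := Real.pi_pos
  have hinner : ∀ ρ : ℝ,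
      (∫ φ in (-π)..π, ρ / ((Dy^2*(Real.cos φ)^2 + Dz^2*(Real.sin φ)^2)*ρ^2 + r^2))
      = 2*π*ρ/Real.sqrt ((Dy^2*ρ^2+r^2)*(Dz^2*ρ^2+r^2)) := by
    intro ρ
    have hApos : 0 < Dy^2*ρ^2+r^2 := by positivity
    have hBpos : 0 < Dz^2*ρ^2+r^2 := by positivity
    have h1 : ∀ φ : ℝ, ρ / ((Dy^2*(Real.cos φ)^2 + Dz^2*(Real.sin φ)^2)*ρ^2 + r^2)
        = ρ * (1/((Dy^2*ρ^2+r^2)*(Real.cos φ)^2 + (Dz^2*ρ^2+r^2)*(Real.sin φ)^2)) := by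
      intro φ
      have hd : (Dy^2*(Real.cos φ)^2 + Dz^2*(Real.sin φ)^2)*ρ^2 + r^2
          = (Dy^2*ρ^2+r^2)*(Real.cos φ)^2 + (Dz^2*ρ^2+r^2)*(Real.sin φ)^2 := by
        linear_combination (-(r^2)) * (Real.sin_sq_add_cos_sq φ)
      rw [hd, div_eq_mul_one_div]
    simp only [h1]
    rw [intervalIntegral.integral_const_mul, inner_int _ _ hApos hBpos]
    ring
  rw [intervalIntegral.integral_congr (fun ρ _ => hinner ρ),
    outer_int Dy Dz r _ hDy hDz hr]
  -- now the algebra of logarithms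
  have hX2 : (1/Real.sqrt π)^2 = 1/π := by
    rw [div_pow, one_pow, Real.sq_sqrt hπ.le]
  have hy : Real.sqrt (Dy^2*(1/Real.sqrt π)^2+r^2) = r * Real.sqrt (Dy^2/(π*r^2)+1) := by
    rw [show Dy^2*(1/Real.sqrt π)^2+r^2 = r^2*(Dy^2/(π*r^2)+1) by
        rw [hX2]; field_simp,
      Real.sqrt_mul (sq_nonneg r), Real.sqrt_sq hr.le]
  have hz : Real.sqrt (Dz^2*(1/Real.sqrt π)^2+r^2) = r * Real.sqrt (Dz^2/(π*r^2)+1) := by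
    rw [show Dz^2*(1/Real.sqrt π)^2+r^2 = r^2*(Dz^2/(π*r^2)+1) by
        rw [hX2]; field_simp,
      Real.sqrt_mul (sq_nonneg r), Real.sqrt_sq hr.le]
  rw [hy, hz]
  have hS : 0 < Dz*Real.sqrt (Dy^2/(π*r^2)+1) + Dy*Real.sqrt (Dz^2/(π*r^2)+1) := by
    have h1 : 0 < Real.sqrt (Dy^2/(π*r^2)+1) := Real.sqrt_pos.2 (by positivity)
    have h2 : 0 < Real.sqrt (Dz^2/(π*r^2)+1) := Real.sqrt_pos.2 (by positivity)
    positivity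
  have hT : Dz*(r*Real.sqrt (Dy^2/(π*r^2)+1)) + Dy*(r*Real.sqrt (Dz^2/(π*r^2)+1))
      = r * (Dz*Real.sqrt (Dy^2/(π*r^2)+1) + Dy*Real.sqrt (Dz^2/(π*r^2)+1)) := by ring
  rw [hT]
  have hden : (0:ℝ) < (Dy+Dz)*r := by positivity
  have hTpos : 0 < r * (Dz*Real.sqrt (Dy^2/(π*r^2)+1) + Dy*Real.sqrt (Dz^2/(π*r^2)+1)) := by
    positivity
  rw [show Real.log (r * (Dz*Real.sqrt (Dy^2/(π*r^2)+1) + Dy*Real.sqrt (Dz^2/(π*r^2)+1)))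
        - Real.log ((Dy+Dz)*r)
      = Real.log ((r * (Dz*Real.sqrt (Dy^2/(π*r^2)+1) + Dy*Real.sqrt (Dz^2/(π*r^2)+1)))
        / ((Dy+Dz)*r)) from (Real.log_div hTpos.ne' hden.ne').symm]
  have harg : (r * (Dz*Real.sqrt (Dy^2/(π*r^2)+1) + Dy*Real.sqrt (Dz^2/(π*r^2)+1)))
      / ((Dy+Dz)*r)
      = (Dz*Real.sqrt (Dy^2/(π*r^2)+1) + Dy*Real.sqrt (Dz^2/(π*r^2)+1)) / (Dy+Dz) := by
    rw [mul_comm (Dy+Dz) r, mul_div_mul_left _ _ hr.ne']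
  rw [harg]
  ring
end

section
/- For r, D > 0 and β ∈ (0,1), the integral 2πr²·∫₀^{1/√π} ρ/√(D⁴ρ⁴ + (4β-2)r²D²ρ² + r⁴) dρ equals (πr²/(2D²))·{ ln[ (2D²√(D⁴/π² + (4β-2)r²D²/π + r⁴) + (2D⁴/π + (4β-2)r²D²)) / (2D²√(D⁴/π² + (4β-2)r²D²/π + r⁴) - (2D⁴/π + (4β-2)r²D²)) ] + ln[(1-β)/β] }. -/
open Real

set_option maxHeartbeats 800000 in
theorem stmt11 (D r β : ℝ) (hD : 0 < D) (hr : 0 < r) (hβ : β ∈ Set.Ioo (0:ℝ) 1) :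
    2*π*r^2 * ∫ ρ in (0:ℝ)..(1/Real.sqrt π),
        ρ / Real.sqrt (D^4*ρ^4 + (4*β-2)*r^2*D^2*ρ^2 + r^4)
    = (π*r^2/(2*D^2)) *
        (Real.log ((2*D^2*Real.sqrt (D^4/π^2 + (4*β-2)*r^2*D^2/π + r^4)
              + (2*D^4/π + (4*β-2)*r^2*D^2))
            / (2*D^2*Real.sqrt (D^4/π^2 + (4*β-2)*r^2*D^2/π + r^4)
              - (2*D^4/π + (4*β-2)*r^2*D^2)))
          + Real.log ((1-β)/β)) := by
  obtain ⟨hβ0, hβ1⟩ := hβ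
  have hπ := Real.pi_pos
  have hβ' : 0 < β*(1-β) := mul_pos hβ0 (by linarith)
  set b : ℝ := (4*β-2)*r^2*D^2 with hb
  have h4b : 4*D^4*r^4 - b^2 = 16*(β*(1-β))*r^4*D^4 := by rw [hb]; ring
  have hQpos : ∀ x : ℝ, 0 < D^4*x^4 + b*x^2 + r^4 := by
    intro x
    nlinarith [sq_nonneg (D^2*x^2 + (2*β-1)*r^2), pow_pos hr 4, hβ']
  have hsq : ∀ x : ℝ, (Real.sqrt (D^4*x^4 + b*x^2 + r^4))^2 = D^4*x^4 + b*x^2 + r^4 :=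
    fun x => Real.sq_sqrt (hQpos x).le
  have hsp : ∀ x, 0 < Real.sqrt (D^4*x^4+b*x^2+r^4) :=
    fun x => Real.sqrt_pos.mpr (hQpos x)
  have hkey : ∀ x : ℝ, 0 < 2*D^2*Real.sqrt (D^4*x^4+b*x^2+r^4) + (2*D^4*x^2 + b) := by
    intro x
    by_contra hcon
    push_neg at hcon
    have h2 : (2*D^2*Real.sqrt (D^4*x^4+b*x^2+r^4))^2 ≤ (2*D^4*x^2 + b)^2 := by
      nlinarith [mul_pos (pow_pos hD 2) (hsp x)]
    have h5 : (2*D^2*Real.sqrt (D^4*x^4+b*x^2+r^4))^2 = 4*D^4*(D^4*x^4+b*x^2+r^4) := by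
      rw [mul_pow, hsq x]; ring
    nlinarith [h4b, h5, mul_pos hβ' (mul_pos (pow_pos hr 4) (pow_pos hD 4))]
  -- antiderivative
  have hF : ∀ x : ℝ, HasDerivAt (fun x => (1/(2*D^2)) *
        Real.log (2*D^2*Real.sqrt (D^4*x^4+b*x^2+r^4) + (2*D^4*x^2 + b)))
      (x / Real.sqrt (D^4*x^4+b*x^2+r^4)) x := by
    intro x
    have h1 : HasDerivAt (fun x : ℝ => D^4*x^4 + b*x^2 + r^4) (4*D^4*x^3 + 2*b*x) x := by
      have h := (((hasDerivAt_pow 4 x).const_mul (D^4)).add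
        ((hasDerivAt_pow 2 x).const_mul b)).add_const (r^4)
      refine h.congr_deriv ?_
      push_cast; ring
    have h2 := h1.sqrt (hQpos x).ne'
    have h3 := (h2.const_mul (2*D^2)).add
      (((hasDerivAt_pow 2 x).const_mul (2*D^4)).add_const b)
    have h4 := (h3.log (hkey x).ne').const_mul (1/(2*D^2))
    refine h4.congr_deriv ?_
    simp only [Pi.add_apply]
    have hS := hsp x
    have hK := hkey x
    generalize Real.sqrt (D^4*x^4+b*x^2+r^4) = S at hS hK ⊢
    simp only [Nat.cast_ofNat, show (2:ℕ)-1 = 1 from rfl, pow_one]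
    field_simp
    ring
  have hcont : Continuous (fun x : ℝ => x / Real.sqrt (D^4*x^4+b*x^2+r^4)) := by
    apply Continuous.div continuous_id
    · exact Continuous.sqrt (by continuity)
    · exact fun x => (hsp x).ne'
  have hIE := intervalIntegral.integral_eq_sub_of_hasDerivAt
    (f := fun x => (1/(2*D^2)) *
        Real.log (2*D^2*Real.sqrt (D^4*x^4+b*x^2+r^4) + (2*D^4*x^2 + b)))
    (f' := fun x => x / Real.sqrt (D^4*x^4+b*x^2+r^4))
    (a := 0) (b := 1/Real.sqrt π)
    (fun x _ => hF x) (hcont.intervalIntegrable _ _)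
  rw [hIE]
  -- evaluate endpoints
  have hπs : (1/Real.sqrt π)^2 = 1/π := by
    rw [div_pow, one_pow, Real.sq_sqrt hπ.le]
  have hπ4 : (1/Real.sqrt π)^4 = 1/π^2 := by
    rw [show (4:ℕ) = 2*2 from rfl, pow_mul, hπs, div_pow, one_pow]
  have e1 : D^4*(1/Real.sqrt π)^4 + b*(1/Real.sqrt π)^2 + r^4 = D^4/π^2 + b/π + r^4 := by
    rw [hπ4, hπs]; ring
  have e2 : 2*D^4*(1/Real.sqrt π)^2 + b = 2*D^4/π + b := by rw [hπs]; ring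
  have e3 : D^4*(0:ℝ)^4 + b*(0:ℝ)^2 + r^4 = (r^2)^2 := by ring
  have e4 : 2*D^4*(0:ℝ)^2 + b = b := by ring
  simp only [e1, e2, e3, e4, Real.sqrt_sq (sq_nonneg r)]
  have e5 : 2*D^2*r^2 + b = 4*β*r^2*D^2 := by rw [hb]; ring
  rw [e5]
  -- final log algebra
  set s1 := Real.sqrt (D^4/π^2 + b/π + r^4) with hs1def
  have hQ1pos : 0 < D^4/π^2 + b/π + r^4 := by
    have h := hQpos (1/Real.sqrt π); rw [e1] at h; exact h
  have hs1sq : s1^2 = D^4/π^2 + b/π + r^4 := Real.sq_sqrt hQ1pos.le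
  have hA1 : 0 < 2*D^2*s1 + (2*D^4/π + b) := by
    have h := hkey (1/Real.sqrt π); rw [e1, e2] at h; exact h
  have hAC : (2*D^2*s1 + (2*D^4/π + b)) * (2*D^2*s1 - (2*D^4/π + b))
      = 16*(β*(1-β))*r^4*D^4 := by
    linear_combination (4*D^4)*hs1sq + h4b
  have hKpos : (0:ℝ) < 16*(β*(1-β))*r^4*D^4 := by positivity
  have hACpos : 0 < (2*D^2*s1 + (2*D^4/π + b)) * (2*D^2*s1 - (2*D^4/π + b)) := by
    rw [hAC]; exact hKpos
  have hC : 0 < 2*D^2*s1 - (2*D^4/π + b) :=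
    ((mul_pos_iff.mp hACpos).resolve_right (fun h => absurd hA1 (not_lt.mpr h.1.le))).2
  have hlog1 : Real.log ((2*D^2*s1 + (2*D^4/π + b))/(2*D^2*s1 - (2*D^4/π + b)))
      = 2*Real.log (2*D^2*s1 + (2*D^4/π + b)) - Real.log (16*(β*(1-β))*r^4*D^4) := by
    rw [Real.log_div hA1.ne' hC.ne']
    have hlogC : Real.log (2*D^2*s1 - (2*D^4/π + b))
        = Real.log (16*(β*(1-β))*r^4*D^4) - Real.log (2*D^2*s1 + (2*D^4/π + b)) := by
      rw [← hAC, Real.log_mul hA1.ne' hC.ne']; ring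
    rw [hlogC]; ring
  have hlog2 : Real.log ((1-β)/β)
      = Real.log (16*(β*(1-β))*r^4*D^4) - 2*Real.log (4*β*r^2*D^2) := by
    have heq : (1-β)/β = (16*(β*(1-β))*r^4*D^4) / ((4*β*r^2*D^2)^2) := by
      field_simp; ring
    rw [heq, Real.log_div hKpos.ne' (by positivity), Real.log_pow]
    push_cast; ring
  rw [hlog1, hlog2]
  ring
end
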